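/- Let m > 0, s0 > 0, α ∈ (0,1), κ = √(2 s0/m), ν = α √(m s0/2) and g(y) = (1 + exp(κ y))^{-1}. Let I ⊆ ℝ be an open interval and let v₁ : I × ℝ → ℝ be such that for all (t,x) ∈ I × ℝ the partial derivatives ∂_t v₁, ∂_x v₁ and ∂²_{xx} v₁ exist and satisfy ∂_t v₁(t,x) = (m/2) ∂²_{xx} v₁(t,x) + m (g'(x − ν t)/g(x − ν t)) ∂_x v₁(t,x). Define v(t,x) = g(x − ν t) v₁(t,x). Then for all (t,x) ∈ I × ℝ, ∂_t v(t,x) = (m/2) ∂²_{xx} v(t,x) + s0 v(t,x) (1 − g(x − ν t)) (2 g(x − ν t) − 1 + α). -/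

import Mathlib

theorem tracer_pde_transfer
    (m s0 α : ℝ) (hm : 0 < m) (hs0 : 0 < s0) (hα : α ∈ Set.Ioo (0 : ℝ) 1)
    (κ ν : ℝ) (hκ : κ = Real.sqrt (2 * s0 / m)) (hν : ν = α * Real.sqrt (m * s0 / 2))
    (g : ℝ → ℝ) (hg : ∀ y, g y = (1 + Real.exp (κ * y))⁻¹)
    (I : Set ℝ) (hIopen : IsOpen I) (hIconn : I.OrdConnected)
    (v₁ : ℝ → ℝ → ℝ)
    (hvt : ∀ t ∈ I, ∀ x : ℝ, DifferentiableAt ℝ (fun τ => v₁ τ x) t)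
    (hvx : ∀ t ∈ I, ∀ x : ℝ, DifferentiableAt ℝ (fun y => v₁ t y) x)
    (hvxx : ∀ t ∈ I, ∀ x : ℝ, DifferentiableAt ℝ (deriv (fun y => v₁ t y)) x)
    (hpde : ∀ t ∈ I, ∀ x : ℝ,
      deriv (fun τ => v₁ τ x) t
        = m / 2 * deriv (deriv (fun y => v₁ t y)) x
          + m * (deriv g (x - ν * t) / g (x - ν * t)) * deriv (fun y => v₁ t y) x)
    (v : ℝ → ℝ → ℝ) (hv : ∀ t x, v t x = g (x - ν * t) * v₁ t x) :
    ∀ t ∈ I, ∀ x : ℝ,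
      DifferentiableAt ℝ (fun τ => v τ x) t ∧
      (∀ y, DifferentiableAt ℝ (fun y' => v t y') y) ∧
      DifferentiableAt ℝ (deriv (fun y' => v t y')) x ∧
      deriv (fun τ => v τ x) t
        = m / 2 * deriv (deriv (fun y' => v t y')) x
          + s0 * v t x * (1 - g (x - ν * t)) * (2 * g (x - ν * t) - 1 + α) := by
  -- basic scalar identities
  have hκ2 : m * κ ^ 2 = 2 * s0 := by
    rw [hκ, Real.sq_sqrt (by positivity)]
    field_simp
  have hνκ : ν * κ = α * s0 := by
    rw [hν, hκ, mul_assoc, ← Real.sqrt_mul (by positivity)]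
    have h : m * s0 / 2 * (2 * s0 / m) = s0 ^ 2 := by
      field_simp
    rw [h, Real.sqrt_sq hs0.le]
  have hcpos : ∀ y : ℝ, 0 < 1 + Real.exp (κ * y) := fun y => by positivity
  have hgpos : ∀ y, 0 < g y := fun y => by rw [hg]; positivity
  -- derivative of g
  have hgd : ∀ y : ℝ, HasDerivAt g (-κ * g y * (1 - g y)) y := by
    intro y
    have h1 : HasDerivAt (fun z : ℝ => 1 + Real.exp (κ * z)) (Real.exp (κ * y) * (κ * 1)) y :=
      (((hasDerivAt_id y).const_mul κ).exp).const_add 1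
    have h2 := h1.inv (ne_of_gt (hcpos y))
    have hgeq : g = fun z : ℝ => (1 + Real.exp (κ * z))⁻¹ := funext hg
    rw [hgeq]
    refine h2.congr_deriv ?_
    symm
    show -κ * (1 + Real.exp (κ * y))⁻¹ * (1 - (1 + Real.exp (κ * y))⁻¹)
      = -(Real.exp (κ * y) * (κ * 1)) / (1 + Real.exp (κ * y)) ^ 2
    have hne := ne_of_gt (hcpos y)
    field_simp
    ring
  have hg' : deriv g = fun y => -κ * g y * (1 - g y) := funext fun y => (hgd y).deriv
  -- second derivative of g
  have hgdd : ∀ y : ℝ, HasDerivAt (deriv g) (κ ^ 2 * g y * (1 - g y) * (1 - 2 * g y)) y := by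
    intro y
    rw [hg']
    have h1 : HasDerivAt (fun z => -κ * g z) (-κ * (-κ * g y * (1 - g y))) y :=
      (hgd y).const_mul (-κ)
    have h2 : HasDerivAt (fun z => 1 - g z) (0 - -κ * g y * (1 - g y)) y :=
      (hasDerivAt_const y (1:ℝ)).sub (hgd y)
    have h3 := h1.mul h2
    refine h3.congr_deriv ?_
    ring
  intro t ht x
  -- spatial derivative of v (as a function)
  have hgc : ∀ y : ℝ, HasDerivAt (fun y' : ℝ => g (y' - ν * t)) (deriv g (y - ν * t)) y := by
    intro y
    have h := (hgd (y - ν * t)).comp y ((hasDerivAt_id y).sub_const (ν * t))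
    rw [(hgd (y - ν * t)).deriv]
    simpa [Function.comp_def] using h
  have hveq : (fun y' => v t y') = fun y' => g (y' - ν * t) * v₁ t y' := funext fun y => hv t y
  have hx_deriv : ∀ y : ℝ, HasDerivAt (fun y' => v t y')
      (deriv g (y - ν * t) * v₁ t y + g (y - ν * t) * deriv (fun y' => v₁ t y') y) y := by
    intro y
    rw [hveq]
    exact (hgc y).mul (hvx t ht y).hasDerivAt
  have hDx : deriv (fun y' => v t y')
      = fun y => deriv g (y - ν * t) * v₁ t y + g (y - ν * t) * deriv (fun y' => v₁ t y') y :=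
    funext fun y => (hx_deriv y).deriv
  -- second spatial derivative of v at x
  have hdg_x : HasDerivAt (fun y : ℝ => deriv g (y - ν * t))
      (κ ^ 2 * g (x - ν * t) * (1 - g (x - ν * t)) * (1 - 2 * g (x - ν * t))) x := by
    have h := (hgdd (x - ν * t)).comp x ((hasDerivAt_id x).sub_const (ν * t))
    simpa [Function.comp_def] using h
  have hvx2 : HasDerivAt (deriv (fun y' => v t y'))
      ((κ ^ 2 * g (x - ν * t) * (1 - g (x - ν * t)) * (1 - 2 * g (x - ν * t))) * v₁ t x
        + deriv g (x - ν * t) * deriv (fun y' => v₁ t y') x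
        + (deriv g (x - ν * t) * deriv (fun y' => v₁ t y') x
            + g (x - ν * t) * deriv (deriv (fun y' => v₁ t y')) x)) x := by
    rw [hDx]
    exact (hdg_x.mul (hvx t ht x).hasDerivAt).add
      ((hgc x).mul (hvxx t ht x).hasDerivAt)
  -- time derivative of v at x
  have hteq : (fun τ => v τ x) = fun τ => g (x - ν * τ) * v₁ τ x := funext fun τ => hv τ x
  have hgt : HasDerivAt (fun τ : ℝ => g (x - ν * τ)) (-κ * g (x - ν * t) * (1 - g (x - ν * t)) * -(ν * 1)) t := by
    have hlin : HasDerivAt (fun τ : ℝ => x - ν * τ) (-(ν * 1)) t :=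
      ((hasDerivAt_id t).const_mul ν).const_sub x
    exact (hgd (x - ν * t)).comp t hlin
  have ht_deriv : HasDerivAt (fun τ => v τ x)
      ((-κ * g (x - ν * t) * (1 - g (x - ν * t)) * -(ν * 1)) * v₁ t x
        + g (x - ν * t) * deriv (fun τ => v₁ τ x) t) t := by
    rw [hteq]
    exact hgt.mul (hvt t ht x).hasDerivAt
  refine ⟨ht_deriv.differentiableAt, fun y => (hx_deriv y).differentiableAt,
    hvx2.differentiableAt, ?_⟩
  rw [ht_deriv.deriv, hvx2.deriv, hv t x, hpde t ht x, (hgd (x - ν * t)).deriv]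
  set G := g (x - ν * t) with hG
  set V := v₁ t x
  set Vx := deriv (fun y' => v₁ t y') x
  set Vxx := deriv (deriv (fun y' => v₁ t y')) x
  have hGne : G ≠ 0 := ne_of_gt (hgpos _)
  have hdiv : -κ * G * (1 - G) / G = -κ * (1 - G) := by
    field_simp
  rw [hdiv]
  linear_combination (G * (1 - G) * V) * hνκ - (G * (1 - G) * (1 - 2 * G) * V / 2) * hκ2
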